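/- Let K be a field with |K| ≥ r+1 and s < r ≤ min{m,n}. Then every affine subspace S of K^{m×n} whose elements are all in row echelon form and which satisfies min{rk(A): A∈S} = s and max{rk(A): A∈S} = r has dimension at most r·n − r(r+1)/2 + 1. -/

import Mathlib

/-- Row echelon form. -/
def RowEchelon {K : Type*} [Field K] {m n : ℕ} (A : Matrix (Fin m) (Fin n) K) : Prop :=
  ∀ i₁ i₂ : Fin m, i₁ < i₂ → ∀ j : Fin n, A i₂ j ≠ 0 → ∃ j' : Fin n, j' < j ∧ A i₁ j' ≠ 0

namespace Stmt11Aux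


variable {K : Type*} [Field K] {m n : ℕ} {A : Matrix (Fin m) (Fin n) K}

lemma left_zero (h : RowEchelon A) :
    ∀ (k : ℕ) (i : Fin m) (j : Fin n), (i : ℕ) ≤ k → (j : ℕ) < (i : ℕ) → A i j = 0 := by
  intro k
  induction k with
  | zero => intro i j h1 h2; omega
  | succ k ih =>
    intro i j h1 h2
    by_contra hne
    have him : (i : ℕ) < m := i.isLt
    have hlt : (⟨(i : ℕ) - 1, by omega⟩ : Fin m) < i := by
      rw [Fin.lt_def]; simp; omega
    obtain ⟨j', hj', hj'ne⟩ := h _ i hlt j hne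
    have hj'v : (j' : ℕ) < (j : ℕ) := hj'
    exact hj'ne (ih _ j' (by simp; omega) (by simp; omega))

lemma rank_lt (h : RowEchelon A) (i : Fin m) (j0 : Fin n) (hne : A i j0 ≠ 0) :
    (i : ℕ) < A.rank := by
  classical
  have him : (i : ℕ) < m := i.isLt
  have hrow : ∀ (d k : ℕ), (hk : k + d = (i : ℕ)) → ∃ j, A ⟨k, by omega⟩ j ≠ 0 := by
    intro d
    induction d with
    | zero =>
      intro k hk
      refine ⟨j0, ?_⟩
      have he : (⟨k, by omega⟩ : Fin m) = i := Fin.ext (by simp; omega)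
      rw [he]; exact hne
    | succ d ihd =>
      intro k hk
      obtain ⟨j₁, hj₁⟩ := ihd (k + 1) (by omega)
      obtain ⟨j', _, hj'⟩ := h ⟨k, by omega⟩ ⟨k + 1, by omega⟩ (by rw [Fin.lt_def]; simp) j₁ hj₁
      exact ⟨j', hj'⟩
  set I := (i : ℕ) + 1 with hI
  have hIm : I ≤ m := by omega
  set er : Fin I → Fin m := Fin.castLE hIm with her
  have hrow' : ∀ a : Fin I, ∃ j, A (er a) j ≠ 0 := by
    intro a
    have ha := a.isLt
    obtain ⟨j, hj⟩ := hrow ((i : ℕ) - (a : ℕ)) (a : ℕ) (by omega)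
    exact ⟨j, hj⟩
  have hfil : ∀ a : Fin I, (Finset.univ.filter (fun j : Fin n => A (er a) j ≠ 0)).Nonempty := by
    intro a
    obtain ⟨j, hj⟩ := hrow' a
    exact ⟨j, Finset.mem_filter.mpr ⟨Finset.mem_univ _, hj⟩⟩
  set p : Fin I → Fin n := fun a => (Finset.univ.filter (fun j : Fin n => A (er a) j ≠ 0)).min' (hfil a) with hp
  have hp1 : ∀ a, A (er a) (p a) ≠ 0 := fun a =>
    (Finset.mem_filter.mp (Finset.min'_mem _ (hfil a))).2
  have hp2 : ∀ a (j : Fin n), j < p a → A (er a) j = 0 := by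
    intro a j hj
    by_contra hne'
    exact absurd (Finset.min'_le _ j (Finset.mem_filter.mpr ⟨Finset.mem_univ _, hne'⟩)) (not_le.mpr hj)
  have hp3 : ∀ a b : Fin I, a < b → p a < p b := by
    intro a b hab
    obtain ⟨j', hj'lt, hj'ne⟩ := h (er a) (er b) (by rwa [Fin.lt_def] at hab ⊢) (p b) (hp1 b)
    exact lt_of_le_of_lt (Finset.min'_le _ j' (Finset.mem_filter.mpr ⟨Finset.mem_univ _, hj'ne⟩)) hj'lt
  have li : LinearIndependent K (fun a : Fin I => A (er a)) := by
    rw [Fintype.linearIndependent_iff]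
    intro g hg
    suffices hS : ∀ t, ∀ a : Fin I, (a : ℕ) = t → g a = 0 by
      intro a; exact hS a a rfl
    intro t
    induction t using Nat.strong_induction_on with
    | _ t iht =>
      intro a hat
      have hcol := congrFun hg (p a)
      simp only [Finset.sum_apply, Pi.smul_apply, smul_eq_mul, Pi.zero_apply] at hcol
      rw [Finset.sum_eq_single a] at hcol
      · rcases mul_eq_zero.mp hcol with h' | h'
        · exact h'
        · exact absurd h' (hp1 a)
      · intro b _ hba
        rcases lt_or_gt_of_ne hba with hb | hb
        · have hbv : (b : ℕ) < t := by rw [← hat]; exact hb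
          rw [iht (b : ℕ) hbv b rfl, zero_mul]
        · rw [hp2 b (p a) (hp3 a b hb), mul_zero]
      · intro ha; exact absurd (Finset.mem_univ a) ha
  have hcard : I = Module.finrank K (Submodule.span K (Set.range (fun a : Fin I => A (er a)))) := by
    have hli := linearIndependent_iff_card_eq_finrank_span.mp li
    simpa [Set.finrank] using hli
  have hsub : Submodule.span K (Set.range (fun a : Fin I => A (er a))) ≤ Submodule.span K (Set.range A) :=
    Submodule.span_mono (Set.range_subset_iff.mpr (fun a => ⟨er a, rfl⟩))
  have hfin := Submodule.finrank_mono hsub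
  rw [Matrix.rank_eq_finrank_span_row]
  rw [show A.row = A from rfl]
  omega



lemma sum_arith (n r : ℕ) (h : r ≤ n) :
    2 * (∑ i ∈ Finset.range r, (n - 1 - i)) + r * (r + 1) = 2 * (r * n) := by
  induction r with
  | zero => simp
  | succ r ih =>
    rw [Finset.sum_range_succ]
    have ih' := ih (by omega)
    obtain ⟨x, hx⟩ : ∃ x, n = x + (r + 1) := ⟨n - (r + 1), by omega⟩
    subst hx
    rw [show x + (r + 1) - 1 - r = x by omega]
    zify at ih' ⊢
    linear_combination ih'

end Stmt11Aux

theorem stmt11 (K : Type*) [Field K] (m n r s : ℕ)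
    (hK : (r + 1 : Cardinal) ≤ Cardinal.mk K)
    (hsr : s < r) (hrm : r ≤ m) (hrn : r ≤ n)
    (S : AffineSubspace K (Matrix (Fin m) (Fin n) K))
    (hech : ∀ A ∈ S, RowEchelon A)
    (hmin : IsLeast {k : ℕ | ∃ A ∈ S, A.rank = k} s)
    (hmax : IsGreatest {k : ℕ | ∃ A ∈ S, A.rank = k} r) :
    Module.finrank K S.direction ≤ r * n - r * (r + 1) / 2 + 1 := by
  classical
  obtain ⟨A₀, hA₀S, hA₀r⟩ := hmax.1
  have hSne : (S : Set (Matrix (Fin m) (Fin n) K)).Nonempty := ⟨A₀, hA₀S⟩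
  have hrank : ∀ A ∈ S, Matrix.rank A ≤ r := fun A hA => hmax.2 ⟨A, hA, rfl⟩
  have hr0 : 0 < r := lt_of_le_of_lt (Nat.zero_le s) hsr
  -- support of elements of S
  have suppS : ∀ A ∈ S, ∀ (i : Fin m) (j : Fin n), ((j : ℕ) < (i : ℕ) ∨ r ≤ (i : ℕ)) → A i j = 0 := by
    intro A hA i j hij
    rcases hij with hij | hij
    · exact Stmt11Aux.left_zero (hech A hA) (i : ℕ) i j le_rfl hij
    · by_contra hne
      have h1 := Stmt11Aux.rank_lt (hech A hA) i j hne
      have h2 := hrank A hA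
      omega
  have hdir : ∀ B ∈ S.direction, ∃ A₁ ∈ S, ∃ A₂ ∈ S, B = A₁ - A₂ := by
    intro B hB
    rw [AffineSubspace.mem_direction_iff_eq_vsub hSne] at hB
    obtain ⟨A₁, h₁, A₂, h₂, hB⟩ := hB
    exact ⟨A₁, h₁, A₂, h₂, hB⟩
  have suppV : ∀ B ∈ S.direction, ∀ (i : Fin m) (j : Fin n),
      ((j : ℕ) < (i : ℕ) ∨ r ≤ (i : ℕ)) → B i j = 0 := by
    intro B hB i j hij
    obtain ⟨A₁, h₁, A₂, h₂, rfl⟩ := hdir B hB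
    simp [Matrix.sub_apply, suppS A₁ h₁ i j hij, suppS A₂ h₂ i j hij]
  -- diagonal entries
  set dd : ℕ → Matrix (Fin m) (Fin n) K → K := fun i B =>
    if h : i < r then B ⟨i, lt_of_lt_of_le h hrm⟩ ⟨i, lt_of_lt_of_le h hrn⟩ else 0 with hdd
  have ddadd : ∀ i B C, dd i (B + C) = dd i B + dd i C := by
    intro i B C; by_cases h : i < r <;> simp [hdd, h]
  have ddsub : ∀ i B C, dd i (B - C) = dd i B - dd i C := by
    intro i B C; by_cases h : i < r <;> simp [hdd, h]
  have ddsmul : ∀ (i : ℕ) (c : K) (B), dd i (c • B) = c * dd i B := by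
    intro i c B; by_cases h : i < r <;> simp [hdd, h]
  -- the chain condition
  have chain : ∀ A ∈ S, ∀ i : ℕ, i + 1 < r → dd i A = 0 → dd (i + 1) A = 0 := by
    intro A hA i hi hzero
    by_contra hne
    simp only [hdd, dif_pos hi, dif_pos (show i < r by omega)] at hne hzero
    obtain ⟨j', hj'lt, hj'ne⟩ := hech A hA ⟨i, by omega⟩ ⟨i + 1, by omega⟩
      (by rw [Fin.lt_def]; simp) ⟨i + 1, by omega⟩ hne
    have hj'v : (j' : ℕ) < i + 1 := hj'lt
    have hge : ¬ ((j' : ℕ) < i) := by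
      intro hlt
      exact hj'ne (suppS A hA _ _ (Or.inl (by simpa using hlt)))
    have hval : (j' : ℕ) = i := by omega
    have : j' = (⟨i, by omega⟩ : Fin n) := Fin.ext (by simpa using hval)
    rw [this] at hj'ne
    exact hj'ne hzero
  -- proportionality of diagonal functionals
  have key : ∃ k, k < r ∧ ∀ i, i < r → ∃ c : K, ∀ B ∈ S.direction, dd i B = c * dd k B := by
    by_cases hall : ∀ B ∈ S.direction, ∀ i, dd i B = 0
    · exact ⟨0, hr0, fun i _ => ⟨0, fun B hB => by rw [hall B hB i, zero_mul]⟩⟩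
    · push_neg at hall
      obtain ⟨B₁, hB₁, i₁, hi₁⟩ := hall
      have hex : ∃ k, ∃ B ∈ S.direction, dd k B ≠ 0 := ⟨i₁, B₁, hB₁, hi₁⟩
      set k := Nat.find hex with hk
      obtain ⟨B₂, hB₂dir, hB₂⟩ := Nat.find_spec hex
      have hkmin : ∀ j, j < k → ∀ B ∈ S.direction, dd j B = 0 := by
        intro j hj B hB
        by_contra hne
        exact Nat.find_min hex hj ⟨B, hB, hne⟩
      have hkr : k < r := by
        by_contra hge
        apply hB₂
        show dd k B₂ = 0
        simp only [hdd]
        exact dif_neg hge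
      set Bs := (dd k B₂)⁻¹ • B₂ with hBs
      have hBsdir : Bs ∈ S.direction := Submodule.smul_mem _ _ hB₂dir
      have hBs1 : dd k Bs = 1 := by
        rw [hBs, ddsmul]
        field_simp
        exact div_self hB₂
      have main : ∀ d, k + d < r → ∃ c : K,
          (∀ B ∈ S.direction, dd (k + d) B = c * dd k B) ∧
          (c = 0 → ∀ A ∈ S, dd (k + d) A = 0) := by
        intro d
        induction d with
        | zero =>
          exact fun _ => ⟨1, fun B _ => by rw [Nat.add_zero, one_mul],
            fun h => absurd h one_ne_zero⟩
        | succ d ih =>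
          intro hdr
          obtain ⟨c, hc, hc0⟩ := ih (by omega)
          by_cases hcz : c = 0
          · have hAz : ∀ A ∈ S, dd (k + d) A = 0 := hc0 hcz
            have hAz1 : ∀ A ∈ S, dd (k + d + 1) A = 0 := fun A hA =>
              chain A hA (k + d) (by omega) (hAz A hA)
            refine ⟨0, fun B hB => ?_, fun _ A hA => hAz1 A hA⟩
            obtain ⟨A₁, h₁, A₂, h₂, rfl⟩ := hdir B hB
            rw [show k + (d + 1) = k + d + 1 from rfl, ddsub, hAz1 A₁ h₁, hAz1 A₂ h₂]
            ring
          · set t : K := -(dd (k + d) A₀) * c⁻¹ with ht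
            have htdir : t • Bs ∈ S.direction := Submodule.smul_mem _ _ hBsdir
            have hAstarS : (t • Bs) +ᵥ A₀ ∈ S := AffineSubspace.vadd_mem_of_mem_direction htdir hA₀S
            set Astar := (t • Bs) +ᵥ A₀ with hAs
            have hAstar0 : dd (k + d) Astar = 0 := by
              have hv : Astar = t • Bs + A₀ := rfl
              rw [hv, ddadd, ddsmul, hc Bs hBsdir, hBs1, mul_one, ht]
              field_simp
              ring
            have hAstar1 : dd (k + d + 1) Astar = 0 :=
              chain _ hAstarS (k + d) (by omega) hAstar0
            set c' := dd (k + d + 1) Bs with hc'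
            have hker : ∀ B ∈ S.direction, dd k B = 0 → dd (k + d + 1) B = 0 := by
              intro B hB hkB
              have hmem : B +ᵥ Astar ∈ S := AffineSubspace.vadd_mem_of_mem_direction hB hAstarS
              have h0 : dd (k + d) (B + Astar) = 0 := by
                rw [ddadd, hAstar0, hc B hB, hkB, mul_zero, add_zero]
              have h1 : dd (k + d + 1) (B + Astar) = 0 := chain _ hmem (k + d) (by omega) h0
              rw [ddadd, hAstar1, add_zero] at h1
              exact h1
            have hprop : ∀ B ∈ S.direction, dd (k + d + 1) B = c' * dd k B := by
              intro B hB
              have hB' : B - (dd k B) • Bs ∈ S.direction :=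
                Submodule.sub_mem _ hB (Submodule.smul_mem _ _ hBsdir)
              have hz : dd k (B - (dd k B) • Bs) = 0 := by
                rw [ddsub, ddsmul, hBs1, mul_one, sub_self]
              have h2 := hker _ hB' hz
              rw [ddsub, ddsmul] at h2
              rw [← hc'] at h2
              linear_combination h2
            refine ⟨c', hprop, fun hc'0 A hA => ?_⟩
            have hAdir : A - Astar ∈ S.direction := AffineSubspace.vsub_mem_direction hA hAstarS
            have h3 := hprop _ hAdir
            rw [hc'0, zero_mul, ddsub, hAstar1, sub_zero] at h3
            exact h3
      refine ⟨k, hkr, fun i hi => ?_⟩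
      rcases lt_or_ge i k with h | h
      · exact ⟨0, fun B hB => by rw [hkmin i h B hB, zero_mul]⟩
      · obtain ⟨c, hc, -⟩ := main (i - k) (by omega)
        refine ⟨c, fun B hB => ?_⟩
        have := hc B hB
        rwa [Nat.add_sub_cancel' h] at this
  obtain ⟨k, hkr, hkey⟩ := key
  -- the injection into a model space
  set km : Fin m := ⟨k, lt_of_lt_of_le hkr hrm⟩ with hkm
  set kn : Fin n := ⟨k, lt_of_lt_of_le hkr hrn⟩ with hkn
  set Φ : Matrix (Fin m) (Fin n) K →ₗ[K] (((i : Fin r) × {j : Fin n // Fin.castLE hrn i < j}) → K) × K :=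
    { toFun := fun B => (fun e => B (Fin.castLE hrm e.1) e.2.1, B km kn)
      map_add' := by intro B C; ext <;> simp [Matrix.add_apply]
      map_smul' := by intro c B; ext <;> simp [Matrix.smul_apply] } with hΦ
  have hinj : Function.Injective (Φ.domRestrict S.direction) := by
    rw [← LinearMap.ker_eq_bot, eq_bot_iff]
    rintro ⟨B, hB⟩ hBk
    simp only [LinearMap.mem_ker, LinearMap.domRestrict_apply] at hBk
    have h1 : ∀ e : (i : Fin r) × {j : Fin n // Fin.castLE hrn i < j}, B (Fin.castLE hrm e.1) e.2.1 = 0 := by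
      intro e
      have := congrArg Prod.fst hBk
      exact congrFun this e
    have h2 : B km kn = 0 := congrArg Prod.snd hBk
    rw [Submodule.mem_bot]
    apply Subtype.ext
    show B = 0
    funext i j
    show B i j = 0
    by_cases hir : r ≤ (i : ℕ)
    · exact suppV B hB i j (Or.inr hir)
    by_cases hji : (j : ℕ) < (i : ℕ)
    · exact suppV B hB i j (Or.inl hji)
    push_neg at hir hji
    rcases eq_or_lt_of_le hji with heq | hlt
    · -- diagonal entry
      obtain ⟨c, hc⟩ := hkey (i : ℕ) hir
      have hdB := hc B hB
      have hdk : dd k B = 0 := by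
        simp only [hdd, dif_pos hkr]
        exact h2
      have hdi : dd (i : ℕ) B = B i j := by
        simp only [hdd, dif_pos hir]
        congr 1 <;> exact Fin.ext (by simp [heq])
      rw [hdi] at hdB
      rw [hdB, hdk, mul_zero]
    · exact h1 ⟨⟨(i : ℕ), hir⟩, ⟨j, by rw [Fin.lt_def]; simpa using hlt⟩⟩
  have hle1 : Module.finrank K S.direction ≤ Module.finrank K ((((i : Fin r) × {j : Fin n // Fin.castLE hrn i < j}) → K) × K) :=
    LinearMap.finrank_le_finrank_of_injective hinj
  have hft : Module.finrank K ((((i : Fin r) × {j : Fin n // Fin.castLE hrn i < j}) → K) × K) = Fintype.card ((i : Fin r) × {j : Fin n // Fin.castLE hrn i < j}) + 1 := by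
    rw [Module.finrank_prod, Module.finrank_pi, Module.finrank_self]
  have hcardE : Fintype.card ((i : Fin r) × {j : Fin n // Fin.castLE hrn i < j}) = ∑ i ∈ Finset.range r, (n - 1 - i) := by
    rw [Fintype.card_sigma]
    have hone : ∀ i : Fin r, Fintype.card {j : Fin n // Fin.castLE hrn i < j} = n - 1 - (i : ℕ) := by
      intro i
      have hc1 : Fintype.card {j : Fin n // Fin.castLE hrn i < j}
          = Fintype.card (Set.Ioi (Fin.castLE hrn i)) :=
        Fintype.card_congr (Equiv.subtypeEquivRight (fun _ => Iff.rfl))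
      rw [hc1, ← Set.toFinset_card, Set.toFinset_Ioi, Fin.card_Ioi]
      simp
    rw [Finset.sum_congr rfl (fun i _ => hone i)]
    exact Fin.sum_univ_eq_sum_range (fun i => n - 1 - i) r
  have harith := Stmt11Aux.sum_arith n r hrn
  rw [hft, hcardE] at hle1
  set X := ∑ i ∈ Finset.range r, (n - 1 - i) with hX
  set Q := r * (r + 1) with hQ
  set N := r * n with hN
  omega
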